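/- Let 0 < β < 1 and let G be a graph on n vertices with minimum degree at least (1−β)n. For any (t+1)-clique S with t ≥ 2: ∑_{T} d(T) ≥ (2−(t+1)β)·n + (t−1)·d(S), where the sum is over all t-cliques T contained in S. -/

import Mathlib

/-- The degree of a clique `S`: the number of vertices adjacent to every vertex of `S`. -/
def cliqueDeg {V : Type*} [Fintype V] [DecidableEq V] (G : SimpleGraph V)
    [DecidableRel G.Adj] (S : Finset V) : ℕ :=
  (Finset.univ.filter (fun v => ∀ u ∈ S, G.Adj u v)).card

theorem stmt_10 {V : Type*} [Fintype V] [DecidableEq V] (n : ℕ)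
    (hV : Fintype.card V = n) (G : SimpleGraph V) [DecidableRel G.Adj]
    (β : ℝ) (hβ0 : 0 < β) (hβ1 : β < 1)
    (hδ : ∀ v : V, (1 - β) * n ≤ (G.degree v : ℝ))
    (S : Finset V) (t : ℕ) (hS : G.IsNClique (t + 1) S) (ht : 2 ≤ t) :
    (2 - ((t : ℝ) + 1) * β) * n + ((t : ℝ) - 1) * (cliqueDeg G S : ℝ)
      ≤ ∑ T ∈ S.powersetCard t, (cliqueDeg G T : ℝ) := by
  classical
  have hcard : S.card = t + 1 := hS.card_eq
  -- the t-subsets of S are exactly the sets S.erase u for u ∈ S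
  have himg : S.powersetCard t = S.image (fun u => S.erase u) := by
    ext T
    simp only [Finset.mem_powersetCard, Finset.mem_image]
    constructor
    · rintro ⟨hTS, hT⟩
      have hd : (S \ T).card = 1 := by
        rw [Finset.card_sdiff_of_subset hTS, hcard, hT]; omega
      obtain ⟨u, hu⟩ := Finset.card_eq_one.mp hd
      have huST : u ∈ S \ T := hu ▸ Finset.mem_singleton_self u
      have huS : u ∈ S := (Finset.mem_sdiff.mp huST).1
      have huT : u ∉ T := (Finset.mem_sdiff.mp huST).2
      refine ⟨u, huS, ?_⟩
      have hsub : T ⊆ S.erase u := fun w hw =>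
        Finset.mem_erase.mpr ⟨fun h => huT (h ▸ hw), hTS hw⟩
      exact (Finset.eq_of_subset_of_card_le hsub
        (by rw [Finset.card_erase_of_mem huS, hcard, hT]; omega)).symm
    · rintro ⟨u, huS, rfl⟩
      exact ⟨Finset.erase_subset _ _,
        by rw [Finset.card_erase_of_mem huS, hcard]; omega⟩
  have hinj : ∀ u ∈ S, ∀ v ∈ S, S.erase u = S.erase v → u = v := by
    intro u hu v hv h
    have h1 : u ∉ S.erase v := h ▸ Finset.notMem_erase u S
    by_contra hne
    exact h1 (Finset.mem_erase.mpr ⟨hne, hu⟩)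
  rw [himg, Finset.sum_image hinj]
  -- key pointwise inequality
  have key : ∀ x : V,
      (S.filter (fun u => G.Adj u x)).card
        + (t - 1) * (if (∀ u ∈ S, G.Adj u x) then 1 else 0)
      ≤ (S.filter (fun u => ∀ w ∈ S.erase u, G.Adj w x)).card + (t - 1) := by
    intro x
    by_cases hA : ∀ u ∈ S, G.Adj u x
    · rw [if_pos hA]
      have h1 : (S.filter (fun u => G.Adj u x)) = S :=
        Finset.filter_eq_self.mpr hA
      have h2 : (S.filter (fun u => ∀ w ∈ S.erase u, G.Adj w x)) = S :=
        Finset.filter_eq_self.mpr (fun u _ w hw => hA w (Finset.mem_of_mem_erase hw))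
      rw [h1, h2]
      omega
    · rw [if_neg hA]
      push_neg at hA
      obtain ⟨u0, hu0S, hu0⟩ := hA
      have hsub : (S.filter (fun u => G.Adj u x)) ⊆ S.erase u0 := by
        intro w hw
        rw [Finset.mem_filter] at hw
        exact Finset.mem_erase.mpr ⟨fun h => hu0 (h ▸ hw.2), hw.1⟩
      have hm : (S.filter (fun u => G.Adj u x)).card ≤ t := by
        have h := Finset.card_le_card hsub
        rwa [Finset.card_erase_of_mem hu0S, hcard] at h
      rcases Nat.lt_or_ge (S.filter (fun u => G.Adj u x)).card t with hlt | hge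
      · omega
      · have heq : (S.filter (fun u => G.Adj u x)) = S.erase u0 :=
          Finset.eq_of_subset_of_card_le hsub (by
            rw [Finset.card_erase_of_mem hu0S, hcard]; omega)
        have hc1 : u0 ∈ S.filter (fun u => ∀ w ∈ S.erase u, G.Adj w x) := by
          refine Finset.mem_filter.mpr ⟨hu0S, fun w hw => ?_⟩
          have hwf : w ∈ S.filter (fun u => G.Adj u x) := heq ▸ hw
          exact (Finset.mem_filter.mp hwf).2
        have hpos : 1 ≤ (S.filter (fun u => ∀ w ∈ S.erase u, G.Adj w x)).card :=
          Finset.card_pos.mpr ⟨u0, hc1⟩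
        omega
  -- summed version (over all vertices)
  have hsum : ∑ x : V, ((S.filter (fun u => G.Adj u x)).card
        + (t - 1) * (if (∀ u ∈ S, G.Adj u x) then 1 else 0))
      ≤ ∑ x : V, ((S.filter (fun u => ∀ w ∈ S.erase u, G.Adj w x)).card + (t - 1)) :=
    Finset.sum_le_sum (fun x _ => key x)
  -- identify the pieces
  have hdeg : ∑ x : V, (S.filter (fun u => G.Adj u x)).card = ∑ u ∈ S, G.degree u := by
    simp only [Finset.card_filter]
    rw [Finset.sum_comm]
    refine Finset.sum_congr rfl (fun u hu => ?_)
    rw [← Finset.card_filter, ← SimpleGraph.neighborFinset_eq_filter]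
    rfl
  have hA : ∑ x : V, (if (∀ u ∈ S, G.Adj u x) then 1 else 0) = cliqueDeg G S := by
    rw [cliqueDeg, Finset.card_filter]
  have hC : ∑ x : V, (S.filter (fun u => ∀ w ∈ S.erase u, G.Adj w x)).card
      = ∑ u ∈ S, cliqueDeg G (S.erase u) := by
    simp only [Finset.card_filter, cliqueDeg]
    rw [Finset.sum_comm]
  rw [Finset.sum_add_distrib, Finset.sum_add_distrib, ← Finset.mul_sum, hdeg, hA, hC,
    Finset.sum_const, Finset.card_univ, hV, smul_eq_mul] at hsum
  -- cast to ℝ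
  have hsumR : (∑ u ∈ S, (G.degree u : ℝ)) + ((t : ℝ) - 1) * (cliqueDeg G S : ℝ)
      ≤ (∑ u ∈ S, (cliqueDeg G (S.erase u) : ℝ)) + ((t : ℝ) - 1) * n := by
    have := (Nat.cast_le (α := ℝ)).mpr hsum
    push_cast [Nat.cast_sub (by omega : 1 ≤ t)] at this
    convert this using 2
    · rfl
    · ring
  have hDeg : ((t : ℝ) + 1) * ((1 - β) * n) ≤ ∑ u ∈ S, (G.degree u : ℝ) := by
    have h := Finset.sum_le_sum (fun u (_ : u ∈ S) => hδ u)
    rwa [Finset.sum_const, hcard, nsmul_eq_mul, Nat.cast_add, Nat.cast_one] at h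
  have hid : (2 - ((t : ℝ) + 1) * β) * n = ((t : ℝ) + 1) * ((1 - β) * n) - ((t : ℝ) - 1) * n := by
    ring
  linarith
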